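/- Let X be a complete separable metric space and T a topological semigroup acting strongly proximally on X. If ρ ∈ P(P(X)) is T-invariant (tρ = ρ for all t ∈ T), then ρ is the Dirac measure concentrated at δₓ for some x ∈ X. -/

import Mathlib

open MeasureTheory Filter Topology BoundedContinuousFunction
open scoped ENNReal NNReal

noncomputable instance instMSPM {Ω : Type*} [MeasurableSpace Ω] [TopologicalSpace Ω]
    [OpensMeasurableSpace Ω] : MeasurableSpace (ProbabilityMeasure Ω) := borel _

instance instBSPM {Ω : Type*} [MeasurableSpace Ω] [TopologicalSpace Ω]
    [OpensMeasurableSpace Ω] : BorelSpace (ProbabilityMeasure Ω) := ⟨rfl⟩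

noncomputable def push {X : Type*} [MeasurableSpace X] [TopologicalSpace X] [BorelSpace X]
    (t : C(X, X)) (μ : ProbabilityMeasure X) : ProbabilityMeasure X :=
  μ.map t.continuous.measurable.aemeasurable

noncomputable def push2 {X : Type*} [MeasurableSpace X] [TopologicalSpace X] [BorelSpace X]
    (t : C(X, X)) (ρ : ProbabilityMeasure (ProbabilityMeasure X)) :
    ProbabilityMeasure (ProbabilityMeasure X) :=
  ρ.map (ProbabilityMeasure.continuous_map t.continuous).measurable.aemeasurable

noncomputable def diracPM {X : Type*} [MeasurableSpace X] (x : X) : ProbabilityMeasure X :=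
  ⟨Measure.dirac x, inferInstance⟩

section Aux

variable {Ω : Type*} [MeasurableSpace Ω] [TopologicalSpace Ω] [HasOuterApproxClosed Ω]
  [BorelSpace Ω]

/-- Integration of a bounded continuous `ℝ≥0`-valued function is continuous on `P(Ω)`. -/
lemma continuous_lintegral_bcnn (f : Ω →ᵇ ℝ≥0) :
    Continuous fun μ : ProbabilityMeasure Ω => ∫⁻ ω, f ω ∂(μ : Measure Ω) := by
  have h : (fun μ : ProbabilityMeasure Ω => ∫⁻ ω, f ω ∂(μ : Measure Ω))
      = fun μ : ProbabilityMeasure Ω => ((μ.toFiniteMeasure.testAgainstNN f : ℝ≥0) : ℝ≥0∞) := by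
    funext μ
    rw [show μ.toFiniteMeasure.testAgainstNN f
        = (∫⁻ ω, f ω ∂(μ : Measure Ω)).toNNReal from rfl,
      ENNReal.coe_toNNReal (f.lintegral_lt_top_of_nnreal (μ : Measure Ω)).ne]
  rw [h]
  exact ENNReal.continuous_coe.comp
    ((FiniteMeasure.continuous_testAgainstNN_eval f).comp
      ProbabilityMeasure.toFiniteMeasure_continuous)

/-- Evaluation at a closed set is measurable on `P(Ω)`. -/
lemma measurable_eval_closed {F : Set Ω} (hF : IsClosed F) :
    Measurable fun μ : ProbabilityMeasure Ω => (μ : Measure Ω) F := by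
  apply measurable_of_tendsto_metrizable
    (f := fun n (μ : ProbabilityMeasure Ω) => ∫⁻ ω, hF.apprSeq n ω ∂(μ : Measure Ω))
  · exact fun n => (continuous_lintegral_bcnn (hF.apprSeq n)).measurable
  · rw [tendsto_pi_nhds]
    exact fun μ => HasOuterApproxClosed.tendsto_lintegral_apprSeq hF (μ : Measure Ω)

/-- Evaluation at any measurable set is measurable on `P(Ω)`. -/
lemma measurable_eval {s : Set Ω} (hs : MeasurableSet s) :
    Measurable fun μ : ProbabilityMeasure Ω => (μ : Measure Ω) s := by
  have h_eq : (inferInstance : MeasurableSpace Ω)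
      = MeasurableSpace.generateFrom {t : Set Ω | IsClosed t} := by
    rw [BorelSpace.measurable_eq (α := Ω), borel_eq_generateFrom_isClosed]
  refine MeasurableSpace.induction_on_inter (C := fun s _ => Measurable fun μ : ProbabilityMeasure Ω => (μ : Measure Ω) s) h_eq
    (fun s hs t ht _ => hs.inter ht) ?_ (fun t ht => measurable_eval_closed ht) ?_ ?_ s hs
  · simpa using measurable_const (a := (0 : ℝ≥0∞))
  · intro t htm hC
    have h : (fun μ : ProbabilityMeasure Ω => (μ : Measure Ω) tᶜ)
        = fun μ : ProbabilityMeasure Ω => 1 - (μ : Measure Ω) t := by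
      funext μ
      rw [measure_compl htm (measure_ne_top _ _), measure_univ]
    rw [h]
    exact (ENNReal.continuous_sub_left ENNReal.one_ne_top).measurable.comp hC
  · intro f hdisj hfm hC
    have h : (fun μ : ProbabilityMeasure Ω => (μ : Measure Ω) (⋃ i, f i))
        = fun μ : ProbabilityMeasure Ω => ∑' i, (μ : Measure Ω) (f i) := by
      funext μ
      exact measure_iUnion hdisj hfm
    rw [h]
    exact Measurable.ennreal_tsum hC

lemma measurable_toMeasure :
    Measurable fun μ : ProbabilityMeasure Ω => (μ : Measure Ω) :=
  Measure.measurable_of_measurable_coe _ fun _ hs => measurable_eval hs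

end Aux

/-- A probability measure giving zero mass to the complement of a singleton is a Dirac mass. -/
lemma eq_dirac_of_compl_singleton {Ω : Type*} [MeasurableSpace Ω] [MeasurableSingletonClass Ω]
    (μ : Measure Ω) [IsProbabilityMeasure μ] (a : Ω) (h : μ {a}ᶜ = 0) :
    μ = Measure.dirac a := by
  have ha : μ {a} = 1 := by
    rwa [prob_compl_eq_zero_iff (measurableSet_singleton a)] at h
  ext s hs
  rw [Measure.dirac_apply' a hs]
  by_cases hx : a ∈ s
  · have h1 : μ s ≤ 1 := prob_le_one
    have h2 : (1 : ℝ≥0∞) ≤ μ s := ha ▸ measure_mono (Set.singleton_subset_iff.2 hx)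
    simp [Set.indicator_of_mem hx, le_antisymm h1 h2]
  · have h0 : μ s = 0 :=
      le_antisymm (le_trans (measure_mono fun y hy (hya : y = a) => hx (hya ▸ hy)) h.le) zero_le
    simp [Set.indicator_of_notMem hx, h0]

/-- If a topological semigroup `T` acts strongly proximally on a complete separable metric
space `X` and `ρ ∈ P(P(X))` is `T`-invariant, then `ρ` is the Dirac measure at some `δₓ`. -/
theorem stmt17 {X : Type*} [MetricSpace X] [CompleteSpace X]
    [TopologicalSpace.SeparableSpace X] [MeasurableSpace X] [BorelSpace X]
    {T : Type*} [Semigroup T] [TopologicalSpace T] [ContinuousMul T]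
    (act : T → C(X, X)) (hact : ∀ s t : T, act (s * t) = (act s).comp (act t))
    (hsp : ∀ lam : ProbabilityMeasure X, ∃ (t : ℕ → T) (x : X),
      Tendsto (fun n => push (act (t n)) lam) atTop (𝓝 (diracPM x)))
    (ρ : ProbabilityMeasure (ProbabilityMeasure X)) (hinv : ∀ t : T, push2 (act t) ρ = ρ) :
    ∃ x : X, ρ = diracPM (diracPM x) := by
  classical
  haveI : T2Space (ProbabilityMeasure X) := by
    letI := TopologicalSpace.metrizableSpaceMetric (ProbabilityMeasure X)
    infer_instance
  -- the barycenter map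
  set bary : ProbabilityMeasure (ProbabilityMeasure X) → Measure X :=
    fun σ => ((σ : Measure (ProbabilityMeasure X)).map
      (fun μ : ProbabilityMeasure X => (μ : Measure X))).join with hbary_def
  have hbary_apply : ∀ (σ : ProbabilityMeasure (ProbabilityMeasure X)) {s : Set X},
      MeasurableSet s →
      bary σ s = ∫⁻ μ, (μ : Measure X) s ∂(σ : Measure (ProbabilityMeasure X)) := by
    intro σ s hs
    rw [hbary_def, Measure.join_apply hs,
      lintegral_map (Measure.measurable_coe hs) measurable_toMeasure]
  have hprob : IsProbabilityMeasure (bary ρ) := by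
    constructor
    rw [hbary_apply ρ MeasurableSet.univ]
    simp
  set Λ : ProbabilityMeasure X := ⟨bary ρ, hprob⟩ with hΛdef
  -- equivariance of the barycenter map
  have hequi : ∀ t : T, bary (push2 (act t) ρ) = (bary ρ).map (act t) := by
    intro t
    have hmt : Measurable ((act t) : X → X) := (act t).continuous.measurable
    have hg : Measurable fun ν : ProbabilityMeasure X =>
        ν.map (act t).continuous.measurable.aemeasurable :=
      (ProbabilityMeasure.continuous_map (act t).continuous).measurable
    have h1 : ((push2 (act t) ρ : Measure (ProbabilityMeasure X))).map
        (fun μ : ProbabilityMeasure X => (μ : Measure X))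
        = (((ρ : Measure (ProbabilityMeasure X)).map
            (fun μ : ProbabilityMeasure X => (μ : Measure X))).map (Measure.map (act t))) := by
      show ((ρ : Measure (ProbabilityMeasure X)).map
          (fun ν : ProbabilityMeasure X =>
            ν.map (act t).continuous.measurable.aemeasurable)).map
          (fun μ : ProbabilityMeasure X => (μ : Measure X)) = _
      rw [Measure.map_map measurable_toMeasure hg,
        Measure.map_map (Measure.measurable_map _ hmt) measurable_toMeasure]
      rfl
    rw [hbary_def]
    simp only at h1 ⊢
    rw [h1, Measure.join_map_map hmt]
  -- Λ is invariant
  have hΛinv : ∀ t : T, push (act t) Λ = Λ := by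
    intro t
    apply Subtype.ext
    show (Λ : Measure X).map (act t) = bary ρ
    have : (Λ : Measure X) = bary ρ := rfl
    rw [this, ← hequi t, hinv t]
  -- strong proximality forces Λ = δₓ
  obtain ⟨ts, x, hx⟩ := hsp Λ
  have hconst : (fun n => push (act (ts n)) Λ) = fun _ => Λ := funext fun n => hΛinv (ts n)
  rw [hconst] at hx
  have hΛ : Λ = diracPM x := tendsto_nhds_unique tendsto_const_nhds hx
  refine ⟨x, ?_⟩
  have hΛm : bary ρ = Measure.dirac x := congrArg Subtype.val hΛ
  -- ρ-a.e. μ equals δₓ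
  have hzero : ∫⁻ μ, (μ : Measure X) {x}ᶜ ∂(ρ : Measure (ProbabilityMeasure X)) = 0 := by
    rw [← hbary_apply ρ (measurableSet_singleton x).compl, hΛm,
      Measure.dirac_apply' x (measurableSet_singleton x).compl]
    simp
  have hae : ∀ᵐ (μ : ProbabilityMeasure X) ∂(ρ : Measure (ProbabilityMeasure X)), (μ : Measure X) {x}ᶜ = 0 :=
    (lintegral_eq_zero_iff (measurable_eval (measurableSet_singleton x).compl)).mp hzero
  have hae2 : ∀ᵐ (μ : ProbabilityMeasure X) ∂(ρ : Measure (ProbabilityMeasure X)), μ = diracPM x := by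
    filter_upwards [hae] with μ hμ
    exact Subtype.ext (eq_dirac_of_compl_singleton (μ : Measure X) x hμ)
  haveI : MeasurableSingletonClass (ProbabilityMeasure X) := by
    letI := TopologicalSpace.metrizableSpaceMetric (ProbabilityMeasure X)
    infer_instance
  have hsing : (ρ : Measure (ProbabilityMeasure X)) ({diracPM x}ᶜ : Set (ProbabilityMeasure X)) = 0 := by
    have := ae_iff.mp hae2
    simpa [Set.compl_def] using this
  exact Subtype.ext
    (eq_dirac_of_compl_singleton (ρ : Measure (ProbabilityMeasure X)) (diracPM x) hsing)
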